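/- The congruence lattices L = {(a, b, c) ∈ ℤ³ : a + 2b + 3c ≡ 0 (mod 11)} and L' = {(a, b, c) ∈ ℤ³ : a + 2b + 4c ≡ 0 (mod 11)} are one-norm isospectral: for every integer k ≥ 0, #{(a, b, c) ∈ L : |a| + |b| + |c| = k} = #{(a, b, c) ∈ L' : |a| + |b| + |c| = k}. -/

import Mathlib

open Finset

private noncomputable def bx (k : ℕ) : Finset (ℤ × ℤ × ℤ) :=
  Finset.Icc (-(k:ℤ), -(k:ℤ), -(k:ℤ)) ((k:ℤ), (k:ℤ), (k:ℤ))

private noncomputable def TT (s k : ℕ) : Finset (ℤ × ℤ × ℤ) :=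
  (bx k).filter (fun p => (11:ℤ) ∣ (p.1 + 2 * p.2.1 + (s:ℤ) * p.2.2) ∧
    p.1.natAbs + p.2.1.natAbs + p.2.2.natAbs = k)

private def VV (s : ℕ) : Finset (ℕ × ℕ × ℕ) :=
  ((range 11) ×ˢ (range 11) ×ˢ (range 11)).filter
    (fun v => (v.1 + 2 * v.2.1 + s * v.2.2) % 11 = 0)

private def WW (s : ℕ) : Finset ((ℕ × ℕ × ℕ) × (Bool × Bool × Bool)) := (VV s) ×ˢ univ

private def sel (b : Bool) (v : ℕ) : ℕ := if b then v else 11 - v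

private def sig (w : (ℕ × ℕ × ℕ) × (Bool × Bool × Bool)) : ℕ :=
  sel w.2.1 w.1.1 + sel w.2.2.1 w.1.2.1 + sel w.2.2.2 w.1.2.2

private def FF (p : ℤ × ℤ × ℤ) : (ℕ × ℕ × ℕ) × (Bool × Bool × Bool) :=
  (((p.1 % 11).toNat, (p.2.1 % 11).toNat, (p.2.2 % 11).toNat),
   (decide (0 ≤ p.1), decide (0 ≤ p.2.1), decide (0 ≤ p.2.2)))

private def CC (k s : ℕ) : Finset (ℕ × ℕ × ℕ) :=
  ((range (k+1)) ×ˢ (range (k+1)) ×ˢ (range (k+1))).filter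
    (fun m => s + 11 * (m.1 + m.2.1 + m.2.2) = k)

private def gB (b : Bool) (v m : ℕ) : ℤ :=
  if b then ((v + 11 * m : ℕ) : ℤ) else -(((11 - v) + 11 * m : ℕ) : ℤ)

private def mOf (b : Bool) (v : ℕ) (a : ℤ) : ℕ := (a.natAbs - sel b v) / 11

-- per-coordinate facts
private lemma coord_enc (a : ℤ) (v : ℕ) (b : Bool) (hv : (a % 11).toNat = v)
    (hb : decide (0 ≤ a) = b) : a.natAbs = sel b v + 11 * mOf b v a := by
  cases b <;> simp only [decide_eq_true_eq, decide_eq_false_iff_not, not_le] at hb <;>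
    simp only [sel, mOf, Bool.false_eq_true, if_true, if_false] <;> omega

private lemma coord_dec (a : ℤ) (v : ℕ) (b : Bool) (hv : (a % 11).toNat = v)
    (hb : decide (0 ≤ a) = b) : gB b v (mOf b v a) = a := by
  cases b <;> simp only [decide_eq_true_eq, decide_eq_false_iff_not, not_le] at hb <;>
    simp only [gB, sel, mOf, Bool.false_eq_true, if_true, if_false] <;> push_cast <;> omega

private lemma coord_g (v m : ℕ) (b : Bool) (hv : v < 11) :
    ((gB b v m) % 11).toNat = v ∧ decide (0 ≤ gB b v m) = b ∧
      (gB b v m).natAbs = sel b v + 11 * m := by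
  cases b <;> simp only [gB, sel, Bool.false_eq_true, if_true, if_false] <;>
    refine ⟨by omega, by simp; omega, by omega⟩

set_option maxRecDepth 10000 in
private lemma key : ((WW 3).val.map sig) = ((WW 4).val.map sig) := by decide

private lemma FF_mem (s k : ℕ) : ∀ p ∈ TT s k, FF p ∈ WW s := by
  rintro ⟨a, b, c⟩ hp
  simp only [TT, bx, mem_filter, mem_Icc, Prod.le_def] at hp
  obtain ⟨_, hdvd, hnorm⟩ := hp
  simp only [WW, VV, FF, mem_product, mem_filter, mem_range, mem_univ, and_true]
  refine ⟨⟨by omega, by omega, by omega⟩, ?_⟩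
  have h1 : (11:ℤ) ∣ (a - ((a % 11).toNat : ℤ)) := by omega
  have h2 : (11:ℤ) ∣ (b - ((b % 11).toNat : ℤ)) := by omega
  have h3 : (11:ℤ) ∣ (c - ((c % 11).toNat : ℤ)) := by omega
  have hd : (11:ℤ) ∣ (((a % 11).toNat : ℤ) + 2 * ((b % 11).toNat : ℤ)
      + (s:ℤ) * ((c % 11).toNat : ℤ)) := by
    have h := dvd_sub hdvd (dvd_add (dvd_add h1 (Dvd.dvd.mul_left h2 2))
      (Dvd.dvd.mul_left h3 (s:ℤ)))
    convert h using 1; rfl; ring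
  have hd' : (11:ℕ) ∣ ((a % 11).toNat + 2 * (b % 11).toNat + s * (c % 11).toNat) := by
    rw [show (((a % 11).toNat : ℤ) + 2 * ((b % 11).toNat : ℤ) + (s:ℤ) * ((c % 11).toNat : ℤ))
      = (((a % 11).toNat + 2 * (b % 11).toNat + s * (c % 11).toNat : ℕ) : ℤ) by push_cast; ring]
      at hd
    exact_mod_cast hd
  omega

private lemma fiber_card (s k : ℕ) (w : (ℕ × ℕ × ℕ) × (Bool × Bool × Bool)) (hw : w ∈ WW s) :
    ((TT s k).filter (fun p => FF p = w)).card = (CC k (sig w)).card := by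
  obtain ⟨⟨v1, v2, v3⟩, b1, b2, b3⟩ := w
  simp only [WW, VV, mem_product, mem_filter, mem_range, mem_univ, and_true] at hw
  obtain ⟨⟨hv1, hv2, hv3⟩, hcond⟩ := hw
  refine Finset.card_nbij' (fun p => (mOf b1 v1 p.1, mOf b2 v2 p.2.1, mOf b3 v3 p.2.2))
    (fun m => (gB b1 v1 m.1, gB b2 v2 m.2.1, gB b3 v3 m.2.2)) ?_ ?_ ?_ ?_
  · rintro ⟨a, b, c⟩ (hp : (a, b, c) ∈ (TT s k).filter _)
    simp only [TT, bx, FF, mem_filter, mem_Icc, Prod.le_def, Prod.mk.injEq] at hp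
    obtain ⟨⟨_, _, hnorm⟩, ⟨ha, hb, hc⟩, hb1, hb2, hb3⟩ := hp
    have e1 := coord_enc a v1 b1 ha hb1
    have e2 := coord_enc b v2 b2 hb hb2
    have e3 := coord_enc c v3 b3 hc hb3
    show _ ∈ CC k (sig ((v1, v2, v3), b1, b2, b3))
    rw [CC, mem_filter]
    simp only [CC, sig, mem_coe, mem_filter, mem_product, mem_range]
    omega
  · rintro ⟨m1, m2, m3⟩ (hm : (m1, m2, m3) ∈ CC k (sig ((v1, v2, v3), b1, b2, b3)))
    rw [CC, mem_filter] at hm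
    simp only [CC, sig, mem_coe, mem_filter, mem_product, mem_range] at hm
    obtain ⟨-, hsum⟩ := hm
    obtain ⟨g1a, g1b, g1c⟩ := coord_g v1 m1 b1 hv1
    obtain ⟨g2a, g2b, g2c⟩ := coord_g v2 m2 b2 hv2
    obtain ⟨g3a, g3b, g3c⟩ := coord_g v3 m3 b3 hv3
    show _ ∈ (TT s k).filter (fun p => FF p = ((v1, v2, v3), b1, b2, b3))
    simp only [TT, bx, FF, mem_coe, mem_filter, mem_Icc, Prod.le_def, Prod.mk.injEq]
    refine ⟨⟨⟨by omega, by omega, by omega⟩, ?_, by omega⟩, ⟨g1a, g2a, g3a⟩, g1b, g2b, g3b⟩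
    have d1 : (11:ℤ) ∣ (gB b1 v1 m1 - (v1:ℤ)) := by omega
    have d2 : (11:ℤ) ∣ (gB b2 v2 m2 - (v2:ℤ)) := by omega
    have d3 : (11:ℤ) ∣ (gB b3 v3 m3 - (v3:ℤ)) := by omega
    have dv : (11:ℤ) ∣ ((v1:ℤ) + 2 * (v2:ℤ) + (s:ℤ) * (v3:ℤ)) := by
      have : (11:ℕ) ∣ (v1 + 2 * v2 + s * v3) := Nat.dvd_of_mod_eq_zero hcond
      have := Int.natCast_dvd_natCast.mpr this
      push_cast at this; convert this using 1
    have h := dvd_add (dvd_add (dvd_add d1 (Dvd.dvd.mul_left d2 2))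
      (Dvd.dvd.mul_left d3 (s:ℤ))) dv
    convert h using 1; rfl; ring
  · rintro ⟨a, b, c⟩ (hp : (a, b, c) ∈ (TT s k).filter _)
    simp only [TT, bx, FF, mem_filter, mem_Icc, Prod.le_def, Prod.mk.injEq] at hp
    obtain ⟨-, ⟨ha, hb, hc⟩, hb1, hb2, hb3⟩ := hp
    exact Prod.ext (coord_dec a v1 b1 ha hb1)
      (Prod.ext (coord_dec b v2 b2 hb hb2) (coord_dec c v3 b3 hc hb3))
  · rintro ⟨m1, m2, m3⟩ hm
    obtain ⟨g1a, g1b, g1c⟩ := coord_g v1 m1 b1 hv1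
    obtain ⟨g2a, g2b, g2c⟩ := coord_g v2 m2 b2 hv2
    obtain ⟨g3a, g3b, g3c⟩ := coord_g v3 m3 b3 hv3
    refine Prod.ext ?_ (Prod.ext ?_ ?_) <;> simp only [mOf] <;> omega

private lemma count_eq (s k : ℕ) :
    (TT s k).card = (((WW s).val.map sig).map (fun t => (CC k t).card)).sum := by
  rw [Finset.card_eq_sum_card_fiberwise (FF_mem s k),
    Finset.sum_congr rfl (fun w hw => fiber_card s k w hw),
    Finset.sum_eq_multiset_sum, Multiset.map_map]
  rfl

theorem one_norm_isospectral_L11_123_124 :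
    ∀ k : ℕ,
      Set.ncard {p : ℤ × ℤ × ℤ | (11 : ℤ) ∣ (p.1 + 2 * p.2.1 + 3 * p.2.2) ∧
          p.1.natAbs + p.2.1.natAbs + p.2.2.natAbs = k} =
      Set.ncard {p : ℤ × ℤ × ℤ | (11 : ℤ) ∣ (p.1 + 2 * p.2.1 + 4 * p.2.2) ∧
          p.1.natAbs + p.2.1.natAbs + p.2.2.natAbs = k} := by
  intro k
  have h3 : {p : ℤ × ℤ × ℤ | (11 : ℤ) ∣ (p.1 + 2 * p.2.1 + 3 * p.2.2) ∧
      p.1.natAbs + p.2.1.natAbs + p.2.2.natAbs = k} = ↑(TT 3 k) := by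
    ext ⟨a, b, c⟩
    simp only [TT, bx, Set.mem_setOf_eq, coe_filter, mem_Icc, Prod.le_def, Nat.cast_ofNat]
    omega
  have h4 : {p : ℤ × ℤ × ℤ | (11 : ℤ) ∣ (p.1 + 2 * p.2.1 + 4 * p.2.2) ∧
      p.1.natAbs + p.2.1.natAbs + p.2.2.natAbs = k} = ↑(TT 4 k) := by
    ext ⟨a, b, c⟩
    simp only [TT, bx, Set.mem_setOf_eq, coe_filter, mem_Icc, Prod.le_def, Nat.cast_ofNat]
    omega
  rw [h3, h4, Set.ncard_coe_finset, Set.ncard_coe_finset, count_eq 3 k, count_eq 4 k, key]
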